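/- arXiv:0803.0724 — 2 statements merged into one kernel-verified Lean document; each statement's English description precedes it below -/
import Mathlib

section
/- Let β ∈ [0,2π) with β/(2π) irrational, and let (X_k) be a stationary complex process. If a subsequence n_j^{-1/2} S_{n_j}^{(β)} converges in distribution to a probability measure σ on ℂ, then σ is invariant under the rotation z ↦ e^{iβ} z, and hence (since {e^{-iβm}}_{m≥0} is dense in the circle) σ is invariant under every rotation of ℂ. -/
open Complex MeasureTheory Finset Real Filter Topology NNReal ENNReal BoundedContinuousFunction

noncomputable def twistedSum {Ω : Type*} (X : ℕ → Ω → ℂ) (β : ℝ) (n : ℕ) (ω : Ω) : ℂ :=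
  ∑ k ∈ range n, Complex.exp (((n : ℂ) - 1 - k) * β * I) * X k ω

lemma twistedSum_measurable {Ω : Type*} [MeasurableSpace Ω] (X : ℕ → Ω → ℂ) (β : ℝ) (n : ℕ)
    (hmeas : ∀ k, Measurable (X k)) : Measurable (twistedSum X β n) :=
  Finset.measurable_sum _ fun k _ => (hmeas k).const_mul _

lemma twistedSum_rot {Ω : Type*} (X : ℕ → Ω → ℂ) (β : ℝ) (T : Ω → Ω)
    (hstat : ∀ k : ℕ, X k = X 0 ∘ T^[k]) (n : ℕ) (ω : Ω) :
    Complex.exp (β * I) * twistedSum X β n ω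
      = twistedSum X β n (T ω)
        + (Complex.exp ((n : ℂ) * β * I) * X 0 ω - X 0 (T^[n] ω)) := by
  have hX : ∀ k : ℕ, X k (T ω) = X (k + 1) ω := by
    intro k
    rw [hstat k, hstat (k + 1)]
    simp [Function.iterate_succ_apply]
  set f : ℕ → ℂ := fun k => Complex.exp (((n : ℂ) - k) * β * I) * X k ω with hf
  have h1 : Complex.exp (β * I) * twistedSum X β n ω = ∑ k ∈ range n, f k := by
    rw [twistedSum, Finset.mul_sum]
    refine Finset.sum_congr rfl fun k _ => ?_
    rw [hf, ← mul_assoc, ← Complex.exp_add]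
    congr 2
    ring
  have h2 : twistedSum X β n (T ω) = ∑ k ∈ range n, f (k + 1) := by
    rw [twistedSum]
    refine Finset.sum_congr rfl fun k _ => ?_
    rw [hX k, hf]
    congr 2
    push_cast
    ring
  have h3 : (∑ k ∈ range n, f k) + f n = (∑ k ∈ range n, f (k + 1)) + f 0 :=
    (Finset.sum_range_succ f n).symm.trans (Finset.sum_range_succ' f n)
  have e0 : f 0 = Complex.exp ((n : ℂ) * β * I) * X 0 ω := by
    rw [hf]; norm_num
  have en : f n = X 0 (T^[n] ω) := by
    rw [hf]
    simp [hstat n]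
  rw [h1, h2, ← e0, ← en]
  linear_combination h3

lemma tail_tendsto {Ω : Type*} [MeasurableSpace Ω] (P : Measure Ω) [IsProbabilityMeasure P]
    (g : Ω → ℂ) (hg : Measurable g) (a : ℕ → ℝ) (ha : Tendsto a atTop atTop) :
    Tendsto (fun j => P {ω | a j ≤ ‖g ω‖}) atTop (𝓝 0) := by
  rw [ENNReal.tendsto_nhds_zero]
  intro ε hε
  set F : ℕ → Set Ω := fun M => {ω | (M : ℝ) ≤ ‖g ω‖} with hF
  have hFmeas : ∀ M, MeasurableSet (F M) := fun M =>
    measurableSet_le measurable_const hg.norm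
  have hFanti : Antitone F := by
    intro M N hMN ω hω
    simp only [hF, Set.mem_setOf_eq] at hω ⊢
    exact le_trans (by exact_mod_cast hMN) hω
  have hFempty : ⋂ M, F M = ∅ := by
    ext ω
    simp only [Set.mem_iInter, Set.mem_empty_iff_false, iff_false, not_forall, hF,
      Set.mem_setOf_eq, not_le]
    obtain ⟨M, hM⟩ := exists_nat_gt ‖g ω‖
    exact ⟨M, hM⟩
  have hlim : Tendsto (P ∘ F) atTop (𝓝 0) := by
    have := tendsto_measure_iInter_atTop (μ := P) (fun M => (hFmeas M).nullMeasurableSet)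
      hFanti ⟨0, measure_ne_top _ _⟩
    rwa [hFempty, measure_empty] at this
  obtain ⟨M, hM⟩ := (hlim.eventually_lt_const hε).exists
  filter_upwards [ha.eventually_ge_atTop (M : ℝ)] with j hj
  exact le_trans (measure_mono fun ω hω => le_trans hj hω) hM.le
/-- if `β/(2π)` is irrational, `(X_k)` is stationary (generated by a
measure-preserving `T`), and a subsequence `n_j^{-1/2} S_{n_j}^{(β)}` converges
in distribution to `σ`, then `σ` is invariant under the rotation `z ↦ e^{iβ}z`,
and hence under every rotation of `ℂ`. -/
theorem stmt4 {Ω : Type*} [MeasureSpace Ω] (P : Measure Ω) [IsProbabilityMeasure P]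
    (β : ℝ) (hβ : Irrational (β / (2 * π)))
    (T : Ω → Ω) (hT : MeasurePreserving T P P)
    (X : ℕ → Ω → ℂ) (hmeas : ∀ k, Measurable (X k))
    (hstat : ∀ k : ℕ, X k = X 0 ∘ T^[k])
    (nseq : ℕ → ℕ) (hmono : StrictMono nseq) (hpos : ∀ j, 1 ≤ nseq j)
    (σ : ProbabilityMeasure ℂ)
    (μ : ℕ → ProbabilityMeasure ℂ)
    (hμ : ∀ j, (μ j : Measure ℂ)
        = P.map (fun ω => (Real.sqrt (nseq j))⁻¹ • twistedSum X β (nseq j) ω))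
    (hconv : Tendsto μ atTop (nhds σ)) :
    (σ : Measure ℂ).map (fun z => Complex.exp (β * I) * z) = σ
    ∧ ∀ γ : ℝ, (σ : Measure ℂ).map (fun z => Complex.exp (γ * I) * z) = σ := by
  have hTm : Measurable T := hT.measurable
  have rot_cont : Continuous fun z : ℂ => Complex.exp ((β : ℂ) * I) * z :=
    continuous_const.mul continuous_id
  set g : ℕ → Ω → ℂ := fun j ω => (Real.sqrt (nseq j))⁻¹ • twistedSum X β (nseq j) ω with hgdef
  have hg : ∀ j, Measurable (g j) := fun j =>
    by have := (twistedSum_measurable X β (nseq j) hmeas).const_smul (Real.sqrt (nseq j))⁻¹; exact this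
  set Y : ℕ → Ω → ℂ := fun j ω => g j (T ω) with hYdef
  have hY : ∀ j, Measurable (Y j) := fun j => (hg j).comp hTm
  set E : ℕ → Ω → ℂ := fun j ω =>
    (Real.sqrt (nseq j))⁻¹ •
      (Complex.exp ((nseq j : ℂ) * β * I) * X 0 ω - X 0 (T^[nseq j] ω)) with hEdef
  have hYE : ∀ j ω, Complex.exp ((β : ℂ) * I) * g j ω = Y j ω + E j ω := by
    intro j ω
    calc Complex.exp ((β : ℂ) * I) * g j ω
        = (Real.sqrt (nseq j))⁻¹ • (Complex.exp ((β : ℂ) * I) * twistedSum X β (nseq j) ω) :=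
          mul_smul_comm _ _ _
      _ = Y j ω + E j ω := by
          rw [twistedSum_rot X β T hstat, smul_add]
  have hlawY : ∀ j, P.map (Y j) = (μ j : Measure ℂ) := by
    intro j
    rw [hμ j]
    show P.map (g j ∘ T) = P.map (g j)
    rw [← Measure.map_map (hg j) hTm, hT.map_eq]
  have hE0 : ∀ δ : ℝ, 0 < δ → Tendsto (fun j => P {ω | δ ≤ ‖E j ω‖}) atTop (𝓝 0) := by
    intro δ hδ
    have hsq : Tendsto (fun j => Real.sqrt (nseq j)) atTop atTop := by
      rw [tendsto_atTop]
      intro b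
      have hcast : Tendsto (fun j => ((nseq j : ℕ) : ℝ)) atTop atTop :=
        tendsto_natCast_atTop_atTop.comp hmono.tendsto_atTop
      filter_upwards [hcast.eventually_ge_atTop (b ^ 2)] with j hj
      calc b ≤ |b| := le_abs_self b
        _ = Real.sqrt (b ^ 2) := (Real.sqrt_sq_eq_abs b).symm
        _ ≤ Real.sqrt (nseq j) := Real.sqrt_le_sqrt hj
    have ha : Tendsto (fun j => (δ / 2) * Real.sqrt (nseq j)) atTop atTop :=
      hsq.const_mul_atTop (by linarith)
    have htail := tail_tendsto P (X 0) (hmeas 0) _ ha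
    have hbound : ∀ j, P {ω | δ ≤ ‖E j ω‖}
        ≤ 2 * P {ω | (δ / 2) * Real.sqrt (nseq j) ≤ ‖X 0 ω‖} := by
      intro j
      set A : Set Ω := {ω | (δ / 2) * Real.sqrt (nseq j) ≤ ‖X 0 ω‖} with hA
      have hAmeas : MeasurableSet A := measurableSet_le measurable_const (hmeas 0).norm
      have hsub : {ω | δ ≤ ‖E j ω‖} ⊆ A ∪ T^[nseq j] ⁻¹' A := by
        intro ω hω
        simp only [Set.mem_setOf_eq] at hω
        by_contra hcon
        rw [Set.mem_union] at hcon
        push_neg at hcon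
        obtain ⟨h1, h2⟩ := hcon
        simp only [hA, Set.mem_setOf_eq, not_le, Set.mem_preimage] at h1 h2
        have hs : (0:ℝ) < Real.sqrt (nseq j) := Real.sqrt_pos.mpr (by exact_mod_cast hpos j)
        have hexp : ‖Complex.exp ((nseq j : ℂ) * β * I) * X 0 ω‖ = ‖X 0 ω‖ := by
          rw [norm_mul]
          simp [Complex.norm_exp]
        have hb1 : ‖E j ω‖ ≤ (Real.sqrt (nseq j))⁻¹ * (‖X 0 ω‖ + ‖X 0 (T^[nseq j] ω)‖) := by
          simp only [hEdef, norm_smul, norm_inv, Real.norm_eq_abs,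
            _root_.abs_of_nonneg (Real.sqrt_nonneg _)]
          gcongr
          exact le_trans (norm_sub_le _ _) (by rw [hexp])
        have hb2 : (Real.sqrt (nseq j))⁻¹ * (‖X 0 ω‖ + ‖X 0 (T^[nseq j] ω)‖) < δ := by
          have hlt : ‖X 0 ω‖ + ‖X 0 (T^[nseq j] ω)‖ < δ * Real.sqrt (nseq j) := by
            have := add_lt_add h1 h2
            linarith
          calc (Real.sqrt (nseq j))⁻¹ * (‖X 0 ω‖ + ‖X 0 (T^[nseq j] ω)‖)
              < (Real.sqrt (nseq j))⁻¹ * (δ * Real.sqrt (nseq j)) := by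
                exact mul_lt_mul_of_pos_left hlt (inv_pos.mpr hs)
            _ = δ := by field_simp
        exact absurd hω (not_le.mpr (lt_of_le_of_lt hb1 hb2))
      calc P {ω | δ ≤ ‖E j ω‖} ≤ P (A ∪ T^[nseq j] ⁻¹' A) := measure_mono hsub
        _ ≤ P A + P (T^[nseq j] ⁻¹' A) := measure_union_le _ _
        _ = P A + P A := by
            rw [(hT.iterate (nseq j)).measure_preimage hAmeas.nullMeasurableSet]
        _ = 2 * P A := by ring
    refine tendsto_of_tendsto_of_tendsto_of_le_of_le tendsto_const_nhds ?_
      (fun j => zero_le) hbound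
    have := ENNReal.Tendsto.const_mul htail (Or.inr (by norm_num : (2:ℝ≥0∞) ≠ ⊤))
    simpa using this
  -- Part A : convergence of rotated measures to σ
  have keyA : Tendsto (fun j => (μ j).map rot_cont.measurable.aemeasurable) atTop (𝓝 σ) := by
    apply tendsto_of_forall_isOpen_le_liminf
    intro G hG
    set ν : ℕ → ProbabilityMeasure ℂ := fun j => (μ j).map rot_cont.measurable.aemeasurable
      with hν
    have main : (σ : Measure ℂ) G ≤ atTop.liminf fun j => (ν j : Measure ℂ) G := by
      set d : ℕ → ℝ := fun k => ((k : ℝ) + 1)⁻¹ with hd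
      have hdpos : ∀ k, 0 < d k := fun k => by positivity
      set U : ℕ → Set ℂ := fun k => {x | ENNReal.ofReal (d k) < EMetric.infEdist x Gᶜ} with hU
      have hUopen : ∀ k, IsOpen (U k) := fun k =>
        isOpen_lt continuous_const EMetric.continuous_infEdist
      have hUsub : ∀ k, U k ⊆ G := by
        intro k x hx
        by_contra hxG
        have h0 : EMetric.infEdist x Gᶜ = 0 := EMetric.infEdist_zero_of_mem hxG
        simp only [hU, Set.mem_setOf_eq, h0] at hx
        exact absurd hx (by simp)
      have hUmono : Monotone U := by
        intro k l hkl x hx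
        simp only [hU, Set.mem_setOf_eq] at hx ⊢
        refine lt_of_le_of_lt (ENNReal.ofReal_le_ofReal ?_) hx
        simp only [hd]
        have hkl' : (k:ℝ) + 1 ≤ (l:ℝ) + 1 := by exact_mod_cast Nat.succ_le_succ hkl
        exact inv_anti₀ (by positivity) hkl'
      have hUnion : (⋃ k, U k) = G := by
        refine subset_antisymm (Set.iUnion_subset hUsub) fun x hxG => ?_
        have hne : EMetric.infEdist x Gᶜ ≠ 0 := by
          intro h0
          exact (EMetric.mem_iff_infEdist_zero_of_closed hG.isClosed_compl).mpr h0 hxG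
        obtain ⟨n, hn⟩ := ENNReal.exists_inv_nat_lt hne
        refine Set.mem_iUnion.2 ⟨n, ?_⟩
        simp only [hU, Set.mem_setOf_eq]
        refine lt_of_le_of_lt ?_ hn
        simp only [hd]
        rw [show ((n:ℝ) + 1) = ((n + 1 : ℕ) : ℝ) by push_cast; ring,
          ENNReal.ofReal_inv_of_pos (by positivity), ENNReal.ofReal_natCast]
        exact ENNReal.inv_le_inv.mpr (by exact_mod_cast Nat.le_succ n)
      have hσG : (σ : Measure ℂ) G = ⨆ k, (σ : Measure ℂ) (U k) := by
        rw [← hUnion, hUmono.measure_iUnion]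
      rw [hσG]
      refine iSup_le fun k => ?_
      have hineq : ∀ j, (μ j : Measure ℂ) (U k)
          ≤ (ν j : Measure ℂ) G + P {ω | d k ≤ ‖E j ω‖} := by
        intro j
        have h1 : (μ j : Measure ℂ) (U k) = P (Y j ⁻¹' U k) := by
          rw [← hlawY j, Measure.map_apply (hY j) (hUopen k).measurableSet]
        have h2 : (ν j : Measure ℂ) G
            = P ((fun ω => Complex.exp ((β:ℂ) * I) * g j ω) ⁻¹' G) := by
          rw [hν]
          rw [ProbabilityMeasure.toMeasure_map,
            Measure.map_apply rot_cont.measurable hG.measurableSet, hμ j,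
            Measure.map_apply (hg j) (rot_cont.measurable hG.measurableSet)]
          rfl
        rw [h1, h2]
        refine le_trans (measure_mono ?_) (measure_union_le _ _)
        intro ω hω
        simp only [Set.mem_preimage] at hω
        by_cases hEω : d k ≤ ‖E j ω‖
        · exact Or.inr hEω
        · refine Or.inl ?_
          simp only [Set.mem_preimage]
          push_neg at hEω
          by_contra hrotG
          have hle : EMetric.infEdist (Y j ω) Gᶜ
              ≤ edist (Y j ω) (Complex.exp ((β:ℂ) * I) * g j ω) :=
            EMetric.infEdist_le_edist_of_mem hrotG
          have hed : edist (Y j ω) (Complex.exp ((β:ℂ) * I) * g j ω)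
              = ENNReal.ofReal ‖E j ω‖ := by
            rw [hYE j ω, edist_dist, dist_eq_norm,
              show Y j ω - (Y j ω + E j ω) = -(E j ω) by ring, norm_neg]
          simp only [hU, Set.mem_setOf_eq] at hω
          have hlt : ENNReal.ofReal (d k) < ENNReal.ofReal ‖E j ω‖ :=
            lt_of_lt_of_le hω (le_trans hle (le_of_eq hed))
          have hpos2 : 0 < ‖E j ω‖ :=
            ENNReal.ofReal_pos.mp (lt_of_le_of_lt zero_le hlt)
          exact absurd ((ENNReal.ofReal_lt_ofReal_iff hpos2).mp hlt) (not_lt.mpr hEω.le)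
      refine le_of_forall_lt fun c hc => ?_
      have h3 : (σ : Measure ℂ) (U k) ≤ atTop.liminf fun j => (μ j : Measure ℂ) (U k) :=
        ProbabilityMeasure.le_liminf_measure_open_of_tendsto hconv (hUopen k)
      have h4 : c < atTop.liminf fun j => (μ j : Measure ℂ) (U k) := lt_of_lt_of_le hc h3
      obtain ⟨c₁, hcc₁, hc₁⟩ := exists_between h4
      obtain ⟨c', hc₁c', hc'⟩ := exists_between hc₁
      refine lt_of_lt_of_le hcc₁ (le_liminf_of_le (by isBoundedDefault) ?_)
      have hev1 : ∀ᶠ j in atTop, c' < (μ j : Measure ℂ) (U k) :=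
        eventually_lt_of_lt_liminf hc'
      have h0 : (0:ℝ≥0∞) < c' - c₁ := by
        rw [tsub_pos_iff_lt]; exact hc₁c'
      have hev2 : ∀ᶠ j in atTop, P {ω | d k ≤ ‖E j ω‖} < c' - c₁ :=
        (hE0 (d k) (hdpos k)).eventually_lt_const h0
      filter_upwards [hev1, hev2] with j h1 h2
      by_contra hcon
      push_neg at hcon
      have hlt' : (μ j : Measure ℂ) (U k) < c' := by
        calc (μ j : Measure ℂ) (U k)
            ≤ (ν j : Measure ℂ) G + P {ω | d k ≤ ‖E j ω‖} := hineq j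
          _ ≤ c₁ + P {ω | d k ≤ ‖E j ω‖} := add_le_add_left hcon.le _
          _ < c₁ + (c' - c₁) := ENNReal.add_lt_add_left (ne_top_of_lt hc₁c') h2
          _ = c' := add_tsub_cancel_of_le hc₁c'.le
      exact lt_irrefl _ (h1.trans hlt')
    have aux : ((atTop.liminf fun j => ν j G : ℝ≥0) : ℝ≥0∞)
        = atTop.liminf fun j => ((ν j G : ℝ≥0) : ℝ≥0∞) := by
      refine Monotone.map_liminf_of_continuousAt (F := atTop) ENNReal.coe_mono (fun j => ν j G)
        ?_ ?_ ?_
      · exact ENNReal.continuous_coe.continuousAt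
      · exact IsBoundedUnder.isCoboundedUnder_ge ⟨1, by simp⟩
      · exact ⟨0, by simp⟩
    rw [← ENNReal.coe_le_coe, aux]
    simp_rw [ProbabilityMeasure.ennreal_coeFn_eq_coeFn_toMeasure]
    exact main
  have keyB : Tendsto (fun j => (μ j).map rot_cont.measurable.aemeasurable) atTop
      (𝓝 (σ.map rot_cont.measurable.aemeasurable)) :=
    ProbabilityMeasure.tendsto_map_of_tendsto_of_continuous μ σ hconv rot_cont
  have hA' : σ.map rot_cont.measurable.aemeasurable = σ := tendsto_nhds_unique keyB keyA
  have hA : (σ : Measure ℂ).map (fun z => Complex.exp ((β : ℂ) * I) * z) = σ := by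
    rw [← ProbabilityMeasure.toMeasure_map σ rot_cont.measurable.aemeasurable]
    exact congrArg ProbabilityMeasure.toMeasure hA'
  refine ⟨hA, ?_⟩
  have rcont : ∀ γ : ℝ, Continuous fun z : ℂ => Complex.exp ((γ : ℂ) * I) * z := fun γ =>
    continuous_const.mul continuous_id
  have rmeas : ∀ γ : ℝ, Measurable fun z : ℂ => Complex.exp ((γ : ℂ) * I) * z := fun γ =>
    (rcont γ).measurable
  have hcomp : ∀ γ δ : ℝ,
      ((fun z : ℂ => Complex.exp ((γ : ℂ) * I) * z) ∘ fun z : ℂ => Complex.exp ((δ : ℂ) * I) * z)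
        = fun z : ℂ => Complex.exp (((γ + δ : ℝ) : ℂ) * I) * z := by
    intro γ δ
    funext z
    simp only [Function.comp_apply, ← mul_assoc, ← Complex.exp_add]
    congr 2
    push_cast
    ring
  set S : Set ℝ := {γ | (σ : Measure ℂ).map (fun z => Complex.exp ((γ:ℂ) * I) * z) = σ}
    with hS
  have hzero : (0:ℝ) ∈ S := by
    show (σ : Measure ℂ).map _ = _
    have hid : (fun z : ℂ => Complex.exp (((0:ℝ):ℂ) * I) * z) = id := by
      funext z; simp
    rw [hid, Measure.map_id]
  have hadd : ∀ γ δ : ℝ, γ ∈ S → δ ∈ S → γ + δ ∈ S := by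
    intro γ δ hγ hδ
    show (σ : Measure ℂ).map _ = _
    rw [← hcomp γ δ, ← Measure.map_map (rmeas γ) (rmeas δ), hδ, hγ]
  have hneg : ∀ γ : ℝ, γ ∈ S → -γ ∈ S := by
    intro γ hγ
    show (σ : Measure ℂ).map _ = _
    conv_lhs => rw [show (σ : Measure ℂ)
      = (σ : Measure ℂ).map (fun z => Complex.exp ((γ:ℂ) * I) * z) from hγ.symm]
    rw [Measure.map_map (rmeas (-γ)) (rmeas γ), hcomp (-γ) γ, neg_add_cancel]
    exact hzero
  have hmem_iff : ∀ γ : ℝ, γ ∈ S ↔ ∀ f : ℂ →ᵇ ℝ≥0,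
      ∫ z, ((f (Complex.exp ((γ:ℂ) * I) * z) : ℝ)) ∂(σ : Measure ℂ)
        = ∫ z, (f z : ℝ) ∂(σ : Measure ℂ) := by
    intro γ
    constructor
    · intro hγ f
      have hint := integral_map (μ := (σ : Measure ℂ))
        (rmeas γ).aemeasurable
        (f := fun z => (f z : ℝ))
        (NNReal.continuous_coe.comp f.continuous).aestronglyMeasurable
      rw [hγ] at hint
      exact hint.symm
    · intro hf
      show (σ : Measure ℂ).map _ = _
      apply ext_of_forall_lintegral_eq_of_IsFiniteMeasure
      intro f
      have hmf : Measurable fun z : ℂ => (f z : ℝ≥0∞) := f.measurable_coe_ennreal_comp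
      rw [lintegral_map hmf (rmeas γ)]
      set F : ℂ →ᵇ ℝ≥0 :=
        f.compContinuous ⟨fun z => Complex.exp ((γ:ℂ) * I) * z, rcont γ⟩ with hF
      have h1 : (∫⁻ z, (f (Complex.exp ((γ:ℂ) * I) * z) : ℝ≥0∞) ∂(σ : Measure ℂ))
          = ∫⁻ z, (F z : ℝ≥0∞) ∂(σ : Measure ℂ) := rfl
      rw [h1]
      have hfin1 : (∫⁻ z, (F z : ℝ≥0∞) ∂(σ : Measure ℂ)) ≠ ⊤ :=
        (BoundedContinuousFunction.lintegral_lt_top_of_nnreal (σ : Measure ℂ) F).ne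
      have hfin2 : (∫⁻ z, (f z : ℝ≥0∞) ∂(σ : Measure ℂ)) ≠ ⊤ :=
        (BoundedContinuousFunction.lintegral_lt_top_of_nnreal (σ : Measure ℂ) f).ne
      rw [← ENNReal.toReal_eq_toReal_iff' hfin1 hfin2]
      rw [F.toReal_lintegral_coe_eq_integral, f.toReal_lintegral_coe_eq_integral]
      exact hf f
  have hclosed : IsClosed S := by
    have hSeq : S = ⋂ f : ℂ →ᵇ ℝ≥0,
        {γ : ℝ | ∫ z, ((f (Complex.exp ((γ:ℂ) * I) * z) : ℝ)) ∂(σ : Measure ℂ)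
          = ∫ z, (f z : ℝ) ∂(σ : Measure ℂ)} := by
      ext γ
      simp only [Set.mem_iInter, Set.mem_setOf_eq]
      exact hmem_iff γ
    rw [hSeq]
    refine isClosed_iInter fun f => isClosed_eq ?_ continuous_const
    refine continuous_of_dominated
      (bound := fun _ => ((nndist (0 : ℂ →ᵇ ℝ≥0) f : ℝ≥0) : ℝ)) ?_ ?_ ?_ ?_
    · intro γ
      exact (NNReal.continuous_coe.comp (f.continuous.comp (rcont γ))).aestronglyMeasurable
    · intro γ
      refine Eventually.of_forall fun z => ?_
      rw [Real.norm_of_nonneg (f _).coe_nonneg]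
      exact_mod_cast f.apply_le_nndist_zero _
    · exact integrable_const _
    · refine Eventually.of_forall fun z => ?_
      have hcz : Continuous fun γ : ℝ => Complex.exp ((γ:ℂ) * I) * z :=
        (Complex.continuous_exp.comp (Complex.continuous_ofReal.mul continuous_const)).mul
          continuous_const
      exact NNReal.continuous_coe.comp (f.continuous.comp hcz)
  let Sgrp : AddSubgroup ℝ :=
    { carrier := S
      zero_mem' := hzero
      add_mem' := fun ha hb => hadd _ _ ha hb
      neg_mem' := fun ha => hneg _ ha }
  have hall : ∀ γ' : ℝ, γ' ∈ S := by
    rcases AddSubgroup.dense_or_cyclic Sgrp with hdense | ⟨a, ha⟩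
    · intro γ'
      have hclos : closure (S : Set ℝ) = Set.univ := hdense.closure_eq
      have hmem : γ' ∈ closure S := by rw [hclos]; trivial
      rwa [hclosed.closure_eq] at hmem
    · exfalso
      have hβS : β ∈ Sgrp := hA
      have h2πS : (2 * π : ℝ) ∈ Sgrp := by
        show (σ : Measure ℂ).map _ = _
        have hid2 : (fun z : ℂ => Complex.exp (((2*π:ℝ):ℂ) * I) * z) = id := by
          funext z
          push_cast
          rw [Complex.exp_two_pi_mul_I, one_mul, id]
        rw [hid2, Measure.map_id]
      rw [ha] at hβS h2πS
      obtain ⟨m, hm⟩ := AddSubgroup.mem_closure_singleton.mp hβS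
      obtain ⟨n, hn⟩ := AddSubgroup.mem_closure_singleton.mp h2πS
      have hπ : (2:ℝ) * π ≠ 0 := by positivity
      have han : (n:ℝ) * a ≠ 0 := by
        rw [← hn] at hπ; rwa [zsmul_eq_mul] at hπ
      have ha0 : a ≠ 0 := fun h => han (by rw [h, mul_zero])
      apply hβ
      refine ⟨(m : ℚ) / (n : ℚ), ?_⟩
      rw [← hm, ← hn, zsmul_eq_mul, zsmul_eq_mul]
      push_cast
      rw [mul_div_mul_right _ _ ha0]
  intro γ
  exact hall γ
end

section
/- Let Σ be a nonempty set of probability measures on ℝ² that is uniformly tight, with each σ ∈ Σ symmetric, and suppose for every σ ∈ Σ there is ρ ∈ Σ with σ = (ρ * ρ)(2^{1/2}·). Then there exists c > 0 such that σ([−r/2, r/2]²) ≥ c·r² for every σ ∈ Σ and every r ∈ (0,1). -/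
open MeasureTheory NNReal


open MeasureTheory NNReal ENNReal Set

noncomputable section
namespace Stmt8Aux

def box (t : ℝ) : Set (ℝ × ℝ) := Set.Icc (-t, -t) (t, t)

lemma mem_box {t : ℝ} {p : ℝ × ℝ} :
    p ∈ box t ↔ (-t ≤ p.1 ∧ p.1 ≤ t) ∧ (-t ≤ p.2 ∧ p.2 ≤ t) := by
  rw [box, Set.mem_Icc, Prod.le_def, Prod.le_def]; tauto

lemma measurableSet_box (t : ℝ) : MeasurableSet (box t) := measurableSet_Icc

lemma volume_box {t : ℝ} (ht : 0 ≤ t) :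
    volume (box t) = ENNReal.ofReal (4 * t ^ 2) := by
  have : box t = Set.Icc (-t) t ×ˢ Set.Icc (-t) t := by
    ext p; rw [mem_box, Set.mem_prod, Set.mem_Icc, Set.mem_Icc]
  rw [this]
  rw [Measure.volume_eq_prod, Measure.prod_prod, Real.volume_Icc,
    ← ENNReal.ofReal_mul (by linarith)]
  congr 1; ring

def ind (s : Set (ℝ × ℝ)) : (ℝ × ℝ) → ℝ≥0∞ := s.indicator 1

lemma ind_le_one (s : Set (ℝ × ℝ)) (x : ℝ × ℝ) : ind s x ≤ 1 := by
  unfold ind; by_cases h : x ∈ s <;> simp [h]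

lemma ind_of_mem {s : Set (ℝ × ℝ)} {x : ℝ × ℝ} (h : x ∈ s) : ind s x = 1 := by
  simp [ind, h]

lemma ind_of_not_mem {s : Set (ℝ × ℝ)} {x : ℝ × ℝ} (h : x ∉ s) : ind s x = 0 := by
  simp [ind, h]

lemma ind_measurable {s : Set (ℝ × ℝ)} (hs : MeasurableSet s) : Measurable (ind s) :=
  measurable_one.indicator hs

lemma lintegral_ind {s : Set (ℝ × ℝ)} (hs : MeasurableSet s) (μ : Measure (ℝ × ℝ)) :
    ∫⁻ x, ind s x ∂μ = μ s := by
  rw [ind, lintegral_indicator hs]; simp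

lemma lintegral_ind_sub {s : Set (ℝ × ℝ)} (hs : MeasurableSet s) (x : ℝ × ℝ) :
    ∫⁻ z, ind s (x - z) ∂volume = volume s := by
  rw [(Measure.measurePreserving_sub_left volume x).lintegral_comp (ind_measurable hs)]
  exact lintegral_ind hs volume

lemma key (μ : Measure (ℝ × ℝ)) [IsProbabilityMeasure μ] {K a : ℝ}
    (hK : 0 < K) (ha : 0 < a)
    (hB : ENNReal.ofReal (1 / 2) ≤ μ (box K)) :
    ENNReal.ofReal (a ^ 2 / (2 * (K + a)) ^ 2)
      ≤ ∫⁻ x, ∫⁻ y, ind (box (2 * a)) (x - y) ∂μ ∂μ := by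
  set C := box a with hC
  set D := box (2 * a) with hD
  set B := box K with hBdef
  set B' := box (K + a) with hB'
  have hmC : Measurable (ind C) := ind_measurable (measurableSet_box a)
  have hmD : Measurable (ind D) := ind_measurable (measurableSet_box (2 * a))
  have hmB' : Measurable (ind B') := ind_measurable (measurableSet_box (K + a))
  set F : ℝ × ℝ → ℝ≥0∞ := fun z => ∫⁻ x, ind C (x - z) ∂μ with hFdef
  have hF : Measurable F := by
    have : Measurable fun p : (ℝ × ℝ) × (ℝ × ℝ) => ind C (p.2 - p.1) :=
      hmC.comp (measurable_snd.sub measurable_fst)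
    exact this.lintegral_prod_right'
  have hmzC : ∀ z : ℝ × ℝ, Measurable fun w : ℝ × ℝ => ind C (w - z) :=
    fun z => hmC.comp (measurable_id.sub measurable_const)
  have hmxD : ∀ x : ℝ × ℝ, Measurable fun y : ℝ × ℝ => ind D (x - y) :=
    fun x => hmD.comp (measurable_const.sub measurable_id)
  have hmeasT : Measurable fun x : ℝ × ℝ => ∫⁻ y, ind D (x - y) ∂μ :=
    (hmD.comp (measurable_fst.sub measurable_snd)).lintegral_prod_right'
  set T : ℝ≥0∞ := ∫⁻ x, ∫⁻ y, ind D (x - y) ∂μ ∂μ with hT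
  set P : ℝ≥0∞ := ∫⁻ z, F z * F z ∂volume with hP
  set L : ℝ≥0∞ := ∫⁻ z, ind B' z * F z ∂volume with hL
  -- pointwise convolution bound
  have ptb : ∀ x y : ℝ × ℝ,
      (∫⁻ z, ind C (x - z) * ind C (y - z) ∂volume) ≤ volume C * ind D (x - y) := by
    intro x y
    by_cases h : x - y ∈ D
    · rw [ind_of_mem h, mul_one]
      calc ∫⁻ z, ind C (x - z) * ind C (y - z) ∂volume
          ≤ ∫⁻ z, ind C (x - z) * 1 ∂volume :=
            lintegral_mono fun z => mul_le_mul_right (ind_le_one _ _) _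
        _ = volume C := by simp only [mul_one]; exact lintegral_ind_sub (measurableSet_box a) x
    · have h0 : ∀ z, ind C (x - z) * ind C (y - z) = 0 := by
        intro z
        by_cases hx : x - z ∈ C
        · have hy : y - z ∉ C := by
            intro hy; apply h
            rw [hC, mem_box] at hx hy
            rw [hD, mem_box]
            simp only [Prod.fst_sub, Prod.snd_sub] at hx hy ⊢
            constructor <;> constructor <;> linarith [hx.1.1, hx.1.2, hx.2.1, hx.2.2,
              hy.1.1, hy.1.2, hy.2.1, hy.2.2]
          rw [ind_of_not_mem hy, mul_zero]
        · rw [ind_of_not_mem hx, zero_mul]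
      simp only [h0, lintegral_zero]
      exact zero_le
  -- triple integral equals P
  have swap1 : ∀ x : ℝ × ℝ,
      (∫⁻ y, ∫⁻ z, ind C (x - z) * ind C (y - z) ∂volume ∂μ)
        = ∫⁻ z, ind C (x - z) * F z ∂volume := by
    intro x
    have hmf : AEMeasurable (Function.uncurry fun (y z : ℝ × ℝ) =>
        ind C (x - z) * ind C (y - z)) (μ.prod volume) := by
      apply Measurable.aemeasurable
      exact ((hmC.comp (measurable_const.sub measurable_snd)).mul
        (hmC.comp (measurable_fst.sub measurable_snd)))
    rw [lintegral_lintegral_swap hmf]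
    exact lintegral_congr fun z => lintegral_const_mul _ (hmzC z)
  have swap2 :
      (∫⁻ x, ∫⁻ z, ind C (x - z) * F z ∂volume ∂μ) = P := by
    have hmf : AEMeasurable (Function.uncurry fun (x z : ℝ × ℝ) =>
        ind C (x - z) * F z) (μ.prod volume) := by
      apply Measurable.aemeasurable
      exact ((hmC.comp (measurable_fst.sub measurable_snd)).mul (hF.comp measurable_snd))
    rw [lintegral_lintegral_swap hmf, hP]
    exact lintegral_congr fun z => lintegral_mul_const _ (hmzC z)
  have main1 : P ≤ volume C * T := by
    have step : (∫⁻ x, ∫⁻ y, ∫⁻ z, ind C (x - z) * ind C (y - z) ∂volume ∂μ ∂μ)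
        ≤ ∫⁻ x, ∫⁻ y, volume C * ind D (x - y) ∂μ ∂μ :=
      lintegral_mono fun x => lintegral_mono fun y => ptb x y
    have eq1 : (∫⁻ x, ∫⁻ y, ∫⁻ z, ind C (x - z) * ind C (y - z) ∂volume ∂μ ∂μ) = P := by
      rw [← swap2]; exact lintegral_congr fun x => swap1 x
    have eq2 : (∫⁻ x, ∫⁻ y, volume C * ind D (x - y) ∂μ ∂μ) = volume C * T := by
      calc (∫⁻ x, ∫⁻ y, volume C * ind D (x - y) ∂μ ∂μ)
          = ∫⁻ x, volume C * ∫⁻ y, ind D (x - y) ∂μ ∂μ :=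
            lintegral_congr fun x => lintegral_const_mul _ (hmxD x)
        _ = volume C * T := lintegral_const_mul _ hmeasT
    calc P = _ := eq1.symm
      _ ≤ _ := step
      _ = volume C * T := eq2
  -- lower bound on L
  have hL1 : ENNReal.ofReal (1 / 2) * volume C ≤ L := by
    have hswap : L = ∫⁻ x, ∫⁻ z, ind B' z * ind C (x - z) ∂volume ∂μ := by
      have hmf : AEMeasurable (Function.uncurry fun (x z : ℝ × ℝ) =>
          ind B' z * ind C (x - z)) (μ.prod volume) := by
        apply Measurable.aemeasurable
        exact ((hmB'.comp measurable_snd).mul (hmC.comp (measurable_fst.sub measurable_snd)))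
      rw [lintegral_lintegral_swap hmf, hL]
      exact lintegral_congr fun z => (lintegral_const_mul _ (hmzC z)).symm
    rw [hswap]
    have pt : ∀ x : ℝ × ℝ, ind B x * volume C ≤ ∫⁻ z, ind B' z * ind C (x - z) ∂volume := by
      intro x
      by_cases hx : x ∈ B
      · have heq : ∀ z, ind B' z * ind C (x - z) = ind C (x - z) := by
          intro z
          by_cases hz : x - z ∈ C
          · have hz' : z ∈ B' := by
              rw [hBdef, mem_box] at hx
              rw [hC, mem_box] at hz
              rw [hB', mem_box]
              simp only [Prod.fst_sub, Prod.snd_sub] at hz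
              constructor <;> constructor <;>
                linarith [hx.1.1, hx.1.2, hx.2.1, hx.2.2, hz.1.1, hz.1.2, hz.2.1, hz.2.2]
            rw [ind_of_mem hz', one_mul]
          · rw [ind_of_not_mem hz, mul_zero]
        rw [ind_of_mem hx, one_mul]
        rw [lintegral_congr heq, lintegral_ind_sub (measurableSet_box a) x]
      · rw [ind_of_not_mem hx, zero_mul]
        exact zero_le
    calc ENNReal.ofReal (1 / 2) * volume C
        ≤ μ B * volume C := mul_le_mul_left hB _
      _ = ∫⁻ x, ind B x * volume C ∂μ := by
          rw [lintegral_mul_const _ (ind_measurable (measurableSet_box K)),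
            lintegral_ind (measurableSet_box K)]
      _ ≤ _ := lintegral_mono pt
  -- Cauchy-Schwarz
  have hCS : L ≤ (volume B') ^ (1 / 2 : ℝ) * P ^ (1 / 2 : ℝ) := by
    have hpq : Real.HolderConjugate 2 2 := Real.HolderConjugate.two_two
    have h := ENNReal.lintegral_mul_le_Lp_mul_Lq volume hpq hmB'.aemeasurable hF.aemeasurable
    simp only [Pi.mul_apply] at h
    have e1 : (∫⁻ z, ind B' z ^ (2 : ℝ) ∂volume) = volume B' := by
      rw [← lintegral_ind (measurableSet_box (K + a)) volume]
      refine lintegral_congr fun z => ?_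
      by_cases hz : z ∈ B'
      · rw [ind_of_mem hz, ENNReal.one_rpow]
      · rw [ind_of_not_mem hz, ENNReal.zero_rpow_of_pos (by norm_num)]
    have e2 : (∫⁻ z, F z ^ (2 : ℝ) ∂volume) = P := by
      rw [hP]
      refine lintegral_congr fun z => ?_
      rw [show (2 : ℝ) = ((2 : ℕ) : ℝ) by norm_num, ENNReal.rpow_natCast, sq]
    rw [e1, e2] at h
    exact h.trans_eq rfl
  -- combine
  have hsq : ENNReal.ofReal (1 / 2) * volume C * (ENNReal.ofReal (1 / 2) * volume C)
      ≤ volume B' * P := by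
    calc ENNReal.ofReal (1 / 2) * volume C * (ENNReal.ofReal (1 / 2) * volume C)
        ≤ L * L := mul_le_mul' hL1 hL1
      _ ≤ ((volume B') ^ (1 / 2 : ℝ) * P ^ (1 / 2 : ℝ))
            * ((volume B') ^ (1 / 2 : ℝ) * P ^ (1 / 2 : ℝ)) := mul_le_mul' hCS hCS
      _ = volume B' * P := by
          rw [mul_mul_mul_comm, ← ENNReal.rpow_add_of_nonneg _ _ (by norm_num) (by norm_num),
            ← ENNReal.rpow_add_of_nonneg _ _ (by norm_num) (by norm_num)]
          norm_num
  have hvolC : volume C = ENNReal.ofReal (4 * a ^ 2) := volume_box (le_of_lt ha)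
  have hvolB' : volume B' = ENNReal.ofReal (4 * (K + a) ^ 2) := volume_box (by linarith)
  set W : ℝ≥0∞ := volume B' * volume C with hW
  have hWval : W = ENNReal.ofReal (4 * (K + a) ^ 2 * (4 * a ^ 2)) := by
    rw [hW, hvolB', hvolC, ← ENNReal.ofReal_mul (by positivity)]
  have hWne : W ≠ 0 := by
    rw [hWval]; simp only [ne_eq, ENNReal.ofReal_eq_zero, not_le]; positivity
  have hWtop : W ≠ ⊤ := by rw [hWval]; exact ENNReal.ofReal_ne_top
  have hchain : ENNReal.ofReal (a ^ 2 / (2 * (K + a)) ^ 2) * W ≤ T * W := by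
    have hWP : volume B' * P ≤ T * W := by
      calc volume B' * P ≤ volume B' * (volume C * T) := mul_le_mul_right main1 _
        _ = T * W := by rw [hW]; ring
    have hlhs : ENNReal.ofReal (a ^ 2 / (2 * (K + a)) ^ 2) * W
        = ENNReal.ofReal (1 / 2) * volume C * (ENNReal.ofReal (1 / 2) * volume C) := by
      rw [hWval, hvolC, ← ENNReal.ofReal_mul (by positivity)]
      rw [mul_mul_mul_comm, ← ENNReal.ofReal_mul (by norm_num),
        ← ENNReal.ofReal_mul (by positivity)]
      congr 1
      have hKa : (K + a) ^ 2 ≠ 0 := by positivity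
      field_simp
    rw [hlhs]
    exact hsq.trans hWP
  exact (ENNReal.mul_le_mul_iff_left hWne hWtop).mp hchain

lemma lintegral_ind_sub_meas {s : Set (ℝ × ℝ)} (hs : MeasurableSet s)
    (μ : Measure (ℝ × ℝ)) (x : ℝ × ℝ) :
    ∫⁻ y, ind s (x - y) ∂μ = μ {y | x - y ∈ s} := by
  have h : ∀ y, ind s (x - y) = ((fun y => x - y) ⁻¹' s).indicator 1 y := by
    intro y
    by_cases hy : x - y ∈ s
    · rw [ind_of_mem hy, Set.indicator_of_mem (by exact hy), Pi.one_apply]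
    · rw [ind_of_not_mem hy, Set.indicator_of_notMem (by exact hy)]
  have hps : MeasurableSet ((fun y => x - y) ⁻¹' s) :=
    hs.preimage (measurable_const.sub measurable_id)
  rw [lintegral_congr h, lintegral_indicator hps]
  simp only [Pi.one_apply, MeasureTheory.lintegral_one, Measure.restrict_apply MeasurableSet.univ,
    Set.univ_inter]
  rfl

end Stmt8Aux

open Stmt8Aux in

/-- a nonempty, uniformly tight family `Σ` of symmetric probability
measures on `ℝ²` which is closed under the divisibility relation
`σ = (ρ * ρ)(2^{1/2}·)` satisfies a uniform lower bound
`σ([-r/2,r/2]²) ≥ c·r²` for all `σ ∈ Σ` and `r ∈ (0,1)`. -/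
theorem stmt8 (S : Set (ProbabilityMeasure (ℝ × ℝ))) (hne : S.Nonempty)
    (htight : ∀ ε : ℝ, 0 < ε → ∃ K : ℝ, 0 < K ∧ ∀ σ ∈ S,
        ((σ {x : ℝ × ℝ | K < ‖x‖} : ℝ≥0) : ℝ) ≤ ε)
    (hsym : ∀ σ ∈ S, (σ : Measure (ℝ × ℝ)).map (fun x => -x) = σ)
    (hdiv : ∀ σ ∈ S, ∃ ρ ∈ S,
        (σ : Measure (ℝ × ℝ))
          = (((ρ : Measure (ℝ × ℝ)).prod (ρ : Measure (ℝ × ℝ))).map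
              (fun p : (ℝ × ℝ) × (ℝ × ℝ) => p.1 + p.2)).map
              (fun x : ℝ × ℝ => (Real.sqrt 2)⁻¹ • x)) :
    ∃ c : ℝ, 0 < c ∧ ∀ σ ∈ S, ∀ r : ℝ, r ∈ Set.Ioo (0 : ℝ) 1 →
      ENNReal.ofReal (c * r ^ 2)
        ≤ (σ : Measure (ℝ × ℝ)) (Set.Icc ((-r / 2, -r / 2) : ℝ × ℝ) (r / 2, r / 2)) := by
  obtain ⟨K, hK, htK⟩ := htight (1/4) (by norm_num)
  refine ⟨1 / (32 * (K + 1) ^ 2), by positivity, ?_⟩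
  intro σ hσ r hr
  obtain ⟨hr0, hr1⟩ := hr
  obtain ⟨ρ, hρ, heq⟩ := hdiv σ hσ
  set μ : Measure (ℝ × ℝ) := (ρ : Measure (ℝ × ℝ)) with hμ
  have hs2 : (0:ℝ) < Real.sqrt 2 := Real.sqrt_pos.mpr (by norm_num)
  have hs2' : Real.sqrt 2 ^ 2 = 2 := Real.sq_sqrt (by norm_num)
  set a : ℝ := Real.sqrt 2 * r / 4 with hadef
  have ha : 0 < a := by positivity
  -- tightness gives mass on box K
  have hμB : ENNReal.ofReal (1/2) ≤ μ (box K) := by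
    have h4 : ((ρ {x : ℝ × ℝ | K < ‖x‖} : ℝ≥0) : ℝ) ≤ 1/4 := htK ρ hρ
    have hcompl : {x : ℝ × ℝ | K < ‖x‖} = (box K)ᶜ := by
      ext x
      simp only [Set.mem_setOf_eq, Set.mem_compl_iff, mem_box, Prod.norm_def,
        Real.norm_eq_abs, lt_max_iff, ← abs_le, not_and_or, not_le]
    have h1 : μ ((box K)ᶜ) ≤ ENNReal.ofReal (1/4) := by
      rw [← hcompl, hμ, ← ProbabilityMeasure.ennreal_coeFn_eq_coeFn_toMeasure,
        ← ENNReal.ofReal_coe_nnreal]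
      exact ENNReal.ofReal_le_ofReal h4
    have hadd : μ (box K) + μ ((box K)ᶜ) = 1 := by
      rw [measure_add_measure_compl (measurableSet_box K)]
      exact measure_univ
    have h2 : (1 : ℝ≥0∞) ≤ μ (box K) + ENNReal.ofReal (1/4) := by
      rw [← hadd]; exact add_le_add_right h1 _
    have h3 : (1 : ℝ≥0∞) - ENNReal.ofReal (1/4) ≤ μ (box K) :=
      tsub_le_iff_right.mpr h2
    refine le_trans ?_ h3
    rw [← ENNReal.ofReal_one, ← ENNReal.ofReal_sub _ (by norm_num)]
    exact ENNReal.ofReal_le_ofReal (by norm_num)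
  -- identify the target set with a box
  have hQicc : Set.Icc ((-r / 2, -r / 2) : ℝ × ℝ) (r / 2, r / 2) = box (r/2) := by
    rw [box, neg_div]
  -- smul preimage
  have hpre : (fun x : ℝ × ℝ => (Real.sqrt 2)⁻¹ • x) ⁻¹' box (r/2) = box (2*a) := by
    ext x
    simp only [Set.mem_preimage, mem_box, Prod.smul_fst, Prod.smul_snd, smul_eq_mul]
    have comp : ∀ u : ℝ,
        (-(r/2) ≤ (Real.sqrt 2)⁻¹ * u ∧ (Real.sqrt 2)⁻¹ * u ≤ r/2)
          ↔ (-(2*a) ≤ u ∧ u ≤ 2*a) := by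
      intro u
      have e : Real.sqrt 2 * (r/2) = 2*a := by rw [hadef]; ring
      have h1 : (Real.sqrt 2)⁻¹ * u ≤ r/2 ↔ u ≤ 2*a := by
        rw [inv_mul_le_iff₀ hs2, e]
      have h2 : -(r/2) ≤ (Real.sqrt 2)⁻¹ * u ↔ -(2*a) ≤ u := by
        rw [neg_le, ← mul_neg, inv_mul_le_iff₀ hs2, e, neg_le]
      rw [h1, h2]
    rw [comp x.1, comp x.2]
  have hmsmul : Measurable fun x : ℝ × ℝ => (Real.sqrt 2)⁻¹ • x :=
    measurable_const_smul _
  have hmadd : Measurable fun p : (ℝ × ℝ) × (ℝ × ℝ) => p.1 + p.2 :=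
    measurable_fst.add measurable_snd
  set D := box (2*a) with hD
  -- compute σ of the box
  have hσQ : (σ : Measure (ℝ × ℝ)) (box (r/2))
      = ∫⁻ x, ∫⁻ y, ind D (x - y) ∂μ ∂μ := by
    rw [heq, Measure.map_apply hmsmul (measurableSet_box _), hpre,
      Measure.map_apply hmadd (measurableSet_box _),
      Measure.prod_apply ((measurableSet_box _).preimage hmadd)]
    refine lintegral_congr fun x => ?_
    have hset : MeasurableSet {y : ℝ × ℝ | x + y ∈ D} :=
      (measurableSet_box _).preimage (measurable_const.add measurable_id)
    have step1 : Prod.mk x ⁻¹' ((fun p : (ℝ × ℝ) × (ℝ × ℝ) => p.1 + p.2) ⁻¹' D)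
        = {y : ℝ × ℝ | x + y ∈ D} := rfl
    have hsymρ : μ.map (fun y => -y) = μ := hsym ρ hρ
    have step2 : μ {y : ℝ × ℝ | x + y ∈ D} = μ {y : ℝ × ℝ | x - y ∈ D} := by
      conv_lhs => rw [← hsymρ]
      rw [Measure.map_apply measurable_neg hset]
      congr 1
    rw [step1, step2, ← lintegral_ind_sub_meas (measurableSet_box _) μ x]
  -- conclude
  rw [hQicc, hσQ]
  refine le_trans ?_ (key μ hK ha hμB)
  apply ENNReal.ofReal_le_ofReal
  have ha2 : a ^ 2 = r ^ 2 / 8 := by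
    rw [hadef]
    rw [show (Real.sqrt 2 * r / 4) ^ 2 = Real.sqrt 2 ^ 2 * r ^ 2 / 16 by ring, hs2']
    ring
  have haone : a ≤ 1 := by
    have hle : Real.sqrt 2 ≤ 2 := by nlinarith [hs2, hs2']
    rw [hadef]; nlinarith
  calc (1 / (32 * (K + 1) ^ 2)) * r ^ 2
      = (r ^ 2 / 8) / ((2 * (K + 1)) ^ 2) := by
        field_simp; ring
    _ ≤ a ^ 2 / ((2 * (K + a)) ^ 2) := by
        apply div_le_div₀ (by positivity) (le_of_eq ha2.symm) (by positivity)
        nlinarith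
end
end
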